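/- If N < 2d - 1, then for any family Φ of N vectors in K^d (K ∈ {ℝ, ℂ}), the phaseless measurement map x ↦ (|⟨x, φ_k⟩|)_{k=1}^N is not injective modulo unimodular scalars. -/

import Mathlib

open scoped InnerProductSpace

lemma exists_orth_of_card_lt {𝕜 : Type*} [RCLike 𝕜] {d n : ℕ} (hn : n < d)
    (f : Fin n → EuclideanSpace 𝕜 (Fin d)) :
    ∃ u : EuclideanSpace 𝕜 (Fin d), u ≠ 0 ∧ ∀ i, ⟪f i, u⟫_𝕜 = 0 := by
  set S : Submodule 𝕜 (EuclideanSpace 𝕜 (Fin d)) := Submodule.span 𝕜 (Set.range f)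
  have hS : Module.finrank 𝕜 S ≤ n := by
    simpa [Set.finrank] using finrank_range_le_card (R := 𝕜) f
  have htot : Module.finrank 𝕜 S + Module.finrank 𝕜 Sᗮ
      = Module.finrank 𝕜 (EuclideanSpace 𝕜 (Fin d)) :=
    S.finrank_add_finrank_orthogonal
  have hd : Module.finrank 𝕜 (EuclideanSpace 𝕜 (Fin d)) = d := finrank_euclideanSpace_fin
  have hpos : Sᗮ ≠ ⊥ := by
    intro h
    rw [h] at htot
    simp only [finrank_bot, add_zero, hd] at htot
    omega
  obtain ⟨u, huS, hu0⟩ := Submodule.exists_mem_ne_zero_of_ne_bot hpos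
  refine ⟨u, hu0, fun i => ?_⟩
  exact (Submodule.mem_orthogonal S u).mp huS (f i) (Submodule.subset_span ⟨i, rfl⟩)

/-- If `N < 2d - 1` then no family of `N` vectors in `𝕜^d` yields an injective
(modulo unimodular scalars) phaseless measurement map. -/
theorem no_phase_retrieval_of_few_measurements
    {𝕜 : Type*} [RCLike 𝕜] {d N : ℕ} (hd : 1 ≤ d) (hN : N < 2 * d - 1)
    (Φ : Fin N → EuclideanSpace 𝕜 (Fin d)) :
    ¬ (∀ x y : EuclideanSpace 𝕜 (Fin d),
        (∀ k : Fin N, ‖⟪Φ k, x⟫_𝕜‖ = ‖⟪Φ k, y⟫_𝕜‖) →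
        ∃ c : 𝕜, ‖c‖ = 1 ∧ y = c • x) := by
  intro H
  set m := d - 1 with hm
  have hm1 : m < d := by omega
  have hNm : N ≤ 2 * m := by omega
  by_cases hdeg : ∃ w : EuclideanSpace 𝕜 (Fin d), w ≠ 0 ∧ ∀ k, ⟪Φ k, w⟫_𝕜 = 0
  · obtain ⟨w, hw0, hworth⟩ := hdeg
    obtain ⟨c, hc1, hc⟩ := H w ((2 : 𝕜) • w) (fun k => by
      rw [inner_smul_right, hworth k]; simp)
    have : ((2 : 𝕜) - c) • w = 0 := by
      rw [sub_smul, hc, sub_self]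
    have h2c : (2 : 𝕜) = c := by
      rcases smul_eq_zero.mp this with h | h
      · exact sub_eq_zero.mp h
      · exact absurd h hw0
    rw [← h2c] at hc1
    norm_num at hc1
  · push_neg at hdeg
    -- first half
    obtain ⟨u, hu0, hu⟩ := exists_orth_of_card_lt hm1
      (fun i : Fin m => if h : (i : ℕ) < N then Φ ⟨i, h⟩ else 0)
    obtain ⟨v, hv0, hv⟩ := exists_orth_of_card_lt hm1
      (fun i : Fin m => if h : m + (i : ℕ) < N then Φ ⟨m + i, h⟩ else 0)
    have hu' : ∀ k : Fin N, (k : ℕ) < m → ⟪Φ k, u⟫_𝕜 = 0 := by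
      intro k hk
      have := hu ⟨k, hk⟩
      simp only [k.isLt, dif_pos] at this
      simpa using this
    have hv' : ∀ k : Fin N, m ≤ (k : ℕ) → ⟪Φ k, v⟫_𝕜 = 0 := by
      intro k hk
      have hik : (k : ℕ) - m < m := by omega
      have := hv ⟨(k : ℕ) - m, hik⟩
      have hmk : m + ((k : ℕ) - m) = (k : ℕ) := by omega
      simp only [hmk, k.isLt, dif_pos] at this
      simpa using this
    obtain ⟨c, hc1, hc⟩ := H (u + v) (u - v) (fun k => by
      rcases lt_or_ge (k : ℕ) m with hk | hk
      · rw [inner_add_right, inner_sub_right, hu' k hk]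
        simp
      · rw [inner_add_right, inner_sub_right, hv' k hk]
        simp)
    -- u - v = c • (u + v), so (1 - c) • u = (1 + c) • v
    have key : ((1 : 𝕜) - c) • u = ((1 : 𝕜) + c) • v := by
      have := hc
      rw [smul_add] at this
      rw [sub_smul, add_smul, one_smul, one_smul]
      have h2 : u - v - c • u - c • v = 0 := by
        rw [sub_eq_iff_eq_add] at this ⊢
        linear_combination (norm := module) this
      linear_combination (norm := module) h2
    have hcne1 : c ≠ 1 := by
      intro h
      rw [h] at key
      simp only [sub_self, zero_smul] at key
      have : ((1 : 𝕜) + 1) • v = 0 := key.symm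
      rcases smul_eq_zero.mp this with h' | h'
      · exact two_ne_zero (by simpa [one_add_one_eq_two] using h')
      · exact hv0 h'
    have hcnem1 : c ≠ -1 := by
      intro h
      rw [h] at key
      simp only [add_neg_cancel, zero_smul] at key
      have : ((1 : 𝕜) - (-1)) • u = 0 := key
      rcases smul_eq_zero.mp this with h' | h'
      · norm_num at h'
      · exact hu0 h'
    -- so u is parallel to v, hence orthogonal to everything
    have h1c : (1 : 𝕜) - c ≠ 0 := sub_ne_zero.mpr (Ne.symm hcne1).symm.symm
    have h1c' : (1 : 𝕜) - c ≠ 0 := fun h => hcne1 (by linear_combination -h)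
    have huv : u = (((1 : 𝕜) + c) / (1 - c)) • v := by
      rw [div_eq_mul_inv, mul_comm, mul_smul]
      rw [eq_inv_smul_iff₀ h1c']
      exact key
    have horth : ∀ k, ⟪Φ k, u⟫_𝕜 = 0 := by
      intro k
      rcases lt_or_ge (k : ℕ) m with hk | hk
      · exact hu' k hk
      · rw [huv, inner_smul_right, hv' k hk, mul_zero]
    obtain ⟨k, hk⟩ := hdeg u hu0
    exact hk (horth k)
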